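/- Let X be a Banach space and C ⊆ X a nonempty bounded closed convex subset. The set of strict contractions F : C → 𝒞𝒦(C) is dense in the complete metric space (ℳ, d∞) of all nonexpansive mappings G : C → 𝒞𝒦(C) with the metric of uniform convergence. -/

import Mathlib

open Metric Set

variable {X : Type*} [NormedAddCommGroup X] [NormedSpace ℝ X]

/-- Hausdorff distance scales under a map that scales distances. -/
lemma hausdorffDist_image_le_of_dist_eq {φ : X → X} {c : ℝ} (hc : 0 ≤ c)
    (hφ : ∀ a b, dist (φ a) (φ b) = c * dist a b)
    {A B : Set X} (hA : IsCompact A) (hB : IsCompact B)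
    (hAne : A.Nonempty) (hBne : B.Nonempty) :
    hausdorffDist (φ '' A) (φ '' B) ≤ c * hausdorffDist A B := by
  have hne : EMetric.hausdorffEdist A B ≠ ⊤ :=
    hausdorffEdist_ne_top_of_nonempty_of_bounded hAne hBne hA.isBounded hB.isBounded
  have hne' : EMetric.hausdorffEdist B A ≠ ⊤ :=
    hausdorffEdist_ne_top_of_nonempty_of_bounded hBne hAne hB.isBounded hA.isBounded
  have hr : 0 ≤ c * hausdorffDist A B :=
    mul_nonneg hc hausdorffDist_nonneg
  apply hausdorffDist_le_of_mem_dist hr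
  · rintro _ ⟨a, haA, rfl⟩
    obtain ⟨b, hbB, hab⟩ := hB.exists_infDist_eq_dist hBne a
    refine ⟨φ b, mem_image_of_mem φ hbB, ?_⟩
    rw [hφ]
    exact mul_le_mul_of_nonneg_left
      (hab ▸ infDist_le_hausdorffDist_of_mem haA hne) hc
  · rintro _ ⟨b, hbB, rfl⟩
    obtain ⟨a, haA, hab⟩ := hA.exists_infDist_eq_dist hAne b
    refine ⟨φ a, mem_image_of_mem φ haA, ?_⟩
    rw [hφ]
    calc c * dist b a ≤ c * hausdorffDist B A :=
          mul_le_mul_of_nonneg_left (hab ▸ infDist_le_hausdorffDist_of_mem hbB hne') hc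
      _ = c * hausdorffDist A B := by rw [hausdorffDist_comm]

/-- `F` maps `C` into the hyperspace `𝒞𝒦(C)` of nonempty convex compact subsets of `C`. -/
def MapsIntoCK (C : Set X) (F : X → Set X) : Prop :=
  ∀ x ∈ C, (F x).Nonempty ∧ IsCompact (F x) ∧ Convex ℝ (F x) ∧ F x ⊆ C

/-- The strict contractions `F : C → 𝒞𝒦(C)` are dense in the space of nonexpansive mappings
`G : C → 𝒞𝒦(C)` with the metric of uniform convergence: for every nonexpansive `G` and every
`ε > 0` there is a strict contraction `F` with `d_∞(F, G) < ε`. -/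
theorem strict_contractions_dense {X : Type*} [NormedAddCommGroup X] [NormedSpace ℝ X]
    [CompleteSpace X] (C : Set X) (hCne : C.Nonempty) (hCb : Bornology.IsBounded C)
    (hCcl : IsClosed C) (hCco : Convex ℝ C)
    (G : X → Set X) (hG : MapsIntoCK C G)
    (hGne : ∀ x ∈ C, ∀ y ∈ C, hausdorffDist (G x) (G y) ≤ ‖x - y‖)
    (ε : ℝ) (hε : 0 < ε) :
    ∃ F : X → Set X, MapsIntoCK C F ∧
      (∃ k : ℝ, 0 ≤ k ∧ k < 1 ∧
        ∀ x ∈ C, ∀ y ∈ C, hausdorffDist (F x) (F y) ≤ k * ‖x - y‖) ∧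
      ∀ x ∈ C, hausdorffDist (F x) (G x) < ε := by
  obtain ⟨z, hz⟩ := hCne
  set D : ℝ := diam C with hD
  have hD0 : 0 ≤ D := diam_nonneg
  set t : ℝ := min (1/2) (ε / (2 * (D + 1))) with ht
  have htpos : 0 < t := lt_min (by norm_num) (div_pos hε (by linarith))
  have ht1 : t < 1 := lt_of_le_of_lt (min_le_left _ _) (by norm_num)
  have htD : t * D < ε := by
    have h1 : t ≤ ε / (2 * (D + 1)) := min_le_right _ _
    have h2 : t * D ≤ (ε / (2 * (D + 1))) * D :=
      mul_le_mul_of_nonneg_right h1 hD0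
    have h3 : (ε / (2 * (D + 1))) * D < ε := by
      rw [div_mul_eq_mul_div, div_lt_iff₀ (by linarith : (0:ℝ) < 2 * (D + 1))]
      nlinarith
    linarith
  set φ : X → X := fun v => (1 - t) • v + t • z with hφ
  have hφdist : ∀ a b, dist (φ a) (φ b) = (1 - t) * dist a b := by
    intro a b
    simp only [hφ, dist_eq_norm]
    have e : (1 - t) • a + t • z - ((1 - t) • b + t • z) = (1 - t) • (a - b) := by module
    rw [e, norm_smul, Real.norm_eq_abs, abs_of_nonneg (by linarith)]
  have hφcont : Continuous φ := by fun_prop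
  refine ⟨fun x => φ '' (G x), ?_, ⟨1 - t, by linarith, by linarith, ?_⟩, ?_⟩
  · intro x hx
    obtain ⟨hne, hcpt, hconv, hsub⟩ := hG x hx
    refine ⟨hne.image φ, hcpt.image hφcont, ?_, ?_⟩
    · rintro _ ⟨a, haG, rfl⟩ _ ⟨b, hbG, rfl⟩ p q hp hq hpq
      refine ⟨p • a + q • b, hconv haG hbG hp hq hpq, ?_⟩
      simp only [hφ, smul_add, smul_smul]
      linear_combination (norm := module) hpq • ((-t) • z)
    · rintro _ ⟨a, haG, rfl⟩
      exact hCco (hsub haG) hz (by linarith) (le_of_lt htpos) (by ring)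
  · intro x hx y hy
    obtain ⟨hnex, hcptx, _, _⟩ := hG x hx
    obtain ⟨hney, hcpty, _, _⟩ := hG y hy
    calc hausdorffDist (φ '' G x) (φ '' G y) ≤ (1 - t) * hausdorffDist (G x) (G y) :=
          hausdorffDist_image_le_of_dist_eq (by linarith) hφdist hcptx hcpty hnex hney
      _ ≤ (1 - t) * ‖x - y‖ :=
          mul_le_mul_of_nonneg_left (hGne x hx y hy) (by linarith)
  · intro x hx
    obtain ⟨hne, hcpt, _, hsub⟩ := hG x hx
    have key : ∀ v ∈ G x, dist (φ v) v ≤ t * D := by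
      intro v hv
      have : dist (φ v) v = t * dist z v := by
        simp only [hφ, dist_eq_norm]
        have e : (1 - t) • v + t • z - v = t • (z - v) := by module
        rw [e]
        rw [norm_smul, Real.norm_eq_abs, abs_of_pos htpos, ← dist_eq_norm]
      rw [this]
      exact mul_le_mul_of_nonneg_left (dist_le_diam_of_mem hCb hz (hsub hv)) (le_of_lt htpos)
    have hle : hausdorffDist (φ '' G x) (G x) ≤ t * D := by
      apply hausdorffDist_le_of_mem_dist (mul_nonneg (le_of_lt htpos) hD0)
      · rintro _ ⟨v, hvG, rfl⟩
        exact ⟨v, hvG, key v hvG⟩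
      · intro v hvG
        exact ⟨φ v, mem_image_of_mem φ hvG, by rw [dist_comm]; exact key v hvG⟩
    exact lt_of_le_of_lt hle htD
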